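/- arXiv:1211.6059 — 6 statements merged into one kernel-verified Lean document; each statement's English description precedes it below -/
import Mathlib

section
/- Let θ > 0, let h ∈ C¹([0, ∞)) satisfy h(0) = 0 and h' > 0 on [0, ∞) (so h is strictly increasing), and let S : [0, ∞) → (0, ∞) be non-increasing with S(0) = 1. Fix a > 0 and define w(t) = (θ+1)·h'(t) for t ≤ a, and w(t) = (θ+1)·h'(t)·S((h(t) − h(a))/h(a)) for t ≥ a. Then for every ρ ≥ a one has ∫₀^ρ h(s)^θ · w(s) ds ≥ h(ρ)^{θ+1} · S((h(ρ) − h(a))/h(a)). -/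
open Set MeasureTheory intervalIntegral

theorem stmt3 (θ : ℝ) (hθ : 0 < θ) (h h' S : ℝ → ℝ)
    (hderiv : ∀ t ∈ Set.Ici (0:ℝ), HasDerivWithinAt h (h' t) (Set.Ici 0) t)
    (hcont : ContinuousOn h' (Set.Ici 0))
    (h0 : h 0 = 0)
    (hpos : ∀ t ∈ Set.Ici (0:ℝ), 0 < h' t)
    (hSpos : ∀ t ∈ Set.Ici (0:ℝ), 0 < S t)
    (hSmono : ∀ s t : ℝ, 0 ≤ s → s ≤ t → S t ≤ S s)
    (hS0 : S 0 = 1)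
    (a : ℝ) (ha : 0 < a)
    (w : ℝ → ℝ)
    (hw1 : ∀ t, 0 ≤ t → t ≤ a → w t = (θ + 1) * h' t)
    (hw2 : ∀ t, a ≤ t → w t = (θ + 1) * h' t * S ((h t - h a) / h a))
    (ρ : ℝ) (hρ : a ≤ ρ) :
    h ρ ^ (θ + 1) * S ((h ρ - h a) / h a) ≤ ∫ s in (0:ℝ)..ρ, h s ^ θ * w s := by
  have hcontH : ContinuousOn h (Set.Ici 0) := fun t ht =>
    (hderiv t ht).continuousWithinAt
  -- h is strictly monotone on [0,∞)
  have hsm : StrictMonoOn h (Set.Ici 0) := by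
    apply strictMonoOn_of_deriv_pos (convex_Ici 0) hcontH
    intro x hx
    rw [interior_Ici] at hx
    have hda : HasDerivAt h (h' x) x :=
      (hderiv x (le_of_lt (Set.mem_Ioi.mp hx))).hasDerivAt (Ici_mem_nhds hx)
    rw [hda.deriv]
    exact hpos x (le_of_lt (Set.mem_Ioi.mp hx))
  have hmono : MonotoneOn h (Set.Ici 0) := hsm.monotoneOn
  have hnn : ∀ t, 0 ≤ t → 0 ≤ h t := by
    intro t ht
    have := hmono (self_mem_Ici) ht ht
    rw [h0] at this; exact this
  have hapos : 0 < h a := by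
    have := hsm (self_mem_Ici) (le_of_lt ha) ha
    rw [h0] at this; exact this
  have hρ0 : (0:ℝ) ≤ ρ := le_trans (le_of_lt ha) hρ
  -- FTC
  have ftc : ∀ b c : ℝ, 0 ≤ b → b ≤ c →
      ∫ s in b..c, (θ + 1) * h s ^ θ * h' s = h c ^ (θ + 1) - h b ^ (θ + 1) := by
    intro b c hb hbc
    have hsub : Set.Icc b c ⊆ Set.Ici (0:ℝ) := fun x hx => le_trans hb hx.1
    apply intervalIntegral.integral_eq_sub_of_hasDeriv_right_of_le hbc
    · apply ContinuousOn.rpow_const (hcontH.mono hsub)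
      intro x hx; exact Or.inr (by linarith)
    · intro x hx
      have hx0 : (0:ℝ) < x := lt_of_le_of_lt hb hx.1
      have hda : HasDerivAt h (h' x) x :=
        (hderiv x (le_of_lt hx0)).hasDerivAt (Ici_mem_nhds hx0)
      have hd := hda.rpow_const (p := θ + 1) (Or.inr (by linarith))
      have heq : h' x * (θ + 1) * h x ^ (θ + 1 - 1) = (θ + 1) * h x ^ θ * h' x := by
        ring_nf
      rw [heq] at hd
      exact hd.hasDerivWithinAt
    · apply ContinuousOn.intervalIntegrable
      rw [Set.uIcc_of_le hbc]
      exact (continuousOn_const.mul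
        (ContinuousOn.rpow_const (hcontH.mono hsub) (fun x hx => Or.inr hθ.le))).mul
        (hcont.mono hsub)
  -- globally antitone extension of S
  set S' : ℝ → ℝ := fun t => S (max t 0) with hS'def
  have hS'anti : Antitone S' := by
    intro s t hst
    exact hSmono (max s 0) (max t 0) (le_max_right _ _) (max_le_max hst le_rfl)
  have hS'eq : ∀ t, 0 ≤ t → S' t = S t := fun t ht => by
    simp only [hS'def, max_eq_left ht]
  set Sρ := S ((h ρ - h a) / h a) with hSρdef
  have hargρ : 0 ≤ (h ρ - h a) / h a := by
    apply div_nonneg _ hapos.le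
    have := hmono (show a ∈ Set.Ici (0:ℝ) from ha.le) hρ0 hρ
    linarith
  have hSρ1 : Sρ ≤ 1 := by
    rw [← hS0]; exact hSmono 0 _ le_rfl hargρ
  have hSρpos : 0 < Sρ := hSpos _ hargρ
  -- continuous part
  set φ : ℝ → ℝ := fun s => (θ + 1) * h s ^ θ * h' s with hφdef
  have hφcontOn : ∀ b c : ℝ, 0 ≤ b → ContinuousOn φ (Set.Icc b c) := by
    intro b c hb
    have hsub : Set.Icc b c ⊆ Set.Ici (0:ℝ) := fun x hx => le_trans hb hx.1
    exact (continuousOn_const.mul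
      (ContinuousOn.rpow_const (hcontH.mono hsub) (fun x hx => Or.inr hθ.le))).mul
      (hcont.mono hsub)
  have hφnn : ∀ x, 0 ≤ x → 0 ≤ φ x := by
    intro x hx
    have h1 : 0 ≤ h x ^ θ := Real.rpow_nonneg (hnn x hx) θ
    have h2 : 0 < h' x := hpos x hx
    positivity
  -- the integrand equals G on [a, ρ]
  set G : ℝ → ℝ := fun s => φ s * S' ((h s - h a) / h a) with hGdef
  have harg : ∀ s, s ∈ Set.Icc a ρ → 0 ≤ (h s - h a) / h a := by
    intro s hs
    apply div_nonneg _ hapos.le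
    have := hmono (show a ∈ Set.Ici (0:ℝ) from ha.le) (le_trans ha.le hs.1) hs.1
    linarith
  have hGeq : Set.EqOn G (fun s => h s ^ θ * w s) (Set.Icc a ρ) := by
    intro s hs
    simp only [hGdef, hφdef]
    rw [hw2 s hs.1, hS'eq _ (harg s hs)]
    ring
  -- integrability of G on [a, ρ]
  have hGint : IntegrableOn G (Set.Icc a ρ) volume := by
    have hcm : ContinuousOn (fun s => (h s - h a) / h a) (Set.Icc a ρ) :=
      ((hcontH.mono (fun x hx => le_trans ha.le hx.1)).sub continuousOn_const).div_const _
    have hSm : AEStronglyMeasurable (fun s => S' ((h s - h a) / h a))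
        (volume.restrict (Set.Icc a ρ)) :=
      (hS'anti.measurable.comp_aemeasurable
        (hcm.aemeasurable measurableSet_Icc)).aestronglyMeasurable
    have hφm : AEStronglyMeasurable φ (volume.restrict (Set.Icc a ρ)) :=
      (hφcontOn a ρ ha.le).aestronglyMeasurable measurableSet_Icc
    obtain ⟨C, hC⟩ := (isCompact_Icc (a := a) (b := ρ)).exists_bound_of_continuousOn
      (hφcontOn a ρ ha.le)
    have hS'bdd : ∀ t, ‖S' t‖ ≤ 1 := by
      intro t
      have h1 : 0 < S' t := hSpos _ (Set.mem_Ici.mpr (le_max_right _ _))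
      have h2 : S' t ≤ 1 := by rw [← hS0]; exact hSmono 0 _ le_rfl (le_max_right _ _)
      rw [Real.norm_eq_abs, abs_of_pos h1]; exact h2
    refine ⟨hφm.mul hSm, ?_⟩
    apply MeasureTheory.HasFiniteIntegral.restrict_of_bounded (C := C)
      measure_Icc_lt_top
    rw [ae_restrict_iff' measurableSet_Icc]
    filter_upwards with x hx
    calc ‖G x‖ = ‖φ x‖ * ‖S' ((h x - h a) / h a)‖ := norm_mul _ _
      _ ≤ ‖φ x‖ * 1 := by
          exact mul_le_mul_of_nonneg_left (hS'bdd _) (norm_nonneg _)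
      _ = ‖φ x‖ := mul_one _
      _ ≤ C := hC x hx
  have hwint2 : IntervalIntegrable (fun s => h s ^ θ * w s) volume a ρ := by
    rw [intervalIntegrable_iff_integrableOn_Icc_of_le hρ]
    exact hGint.congr_fun hGeq measurableSet_Icc
  -- on [0, a]
  have hwint1 : IntervalIntegrable (fun s => h s ^ θ * w s) volume 0 a := by
    apply ContinuousOn.intervalIntegrable
    rw [Set.uIcc_of_le ha.le]
    apply ContinuousOn.congr (hφcontOn 0 a le_rfl)
    intro s hs
    show h s ^ θ * w s = φ s
    rw [hw1 s hs.1 hs.2]; simp only [hφdef]; ring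
  have hsplit : ∫ s in (0:ℝ)..ρ, h s ^ θ * w s =
      (∫ s in (0:ℝ)..a, h s ^ θ * w s) + ∫ s in a..ρ, h s ^ θ * w s :=
    (intervalIntegral.integral_add_adjacent_intervals hwint1 hwint2).symm
  -- value on [0, a]
  have hval1 : ∫ s in (0:ℝ)..a, h s ^ θ * w s = h a ^ (θ + 1) := by
    have := ftc 0 a le_rfl ha.le
    rw [h0, Real.zero_rpow (by linarith), sub_zero] at this
    rw [← this]
    apply intervalIntegral.integral_congr
    intro s hs
    rw [Set.uIcc_of_le ha.le] at hs
    show h s ^ θ * w s = (θ + 1) * h s ^ θ * h' s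
    rw [hw1 s hs.1 hs.2]; ring
  -- lower bound on [a, ρ]
  have hval2 : Sρ * (h ρ ^ (θ + 1) - h a ^ (θ + 1)) ≤ ∫ s in a..ρ, h s ^ θ * w s := by
    have hφint : IntervalIntegrable (fun s => Sρ * φ s) volume a ρ := by
      apply ContinuousOn.intervalIntegrable
      rw [Set.uIcc_of_le hρ]
      exact continuousOn_const.mul (hφcontOn a ρ ha.le)
    have hmono2 : ∀ x ∈ Set.Icc a ρ, Sρ * φ x ≤ h x ^ θ * w x := by
      intro x hx
      have h1 : h x ^ θ * w x = φ x * S ((h x - h a) / h a) := by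
        rw [hw2 x hx.1]; simp only [hφdef]; ring
      rw [h1]
      have h2 : Sρ ≤ S ((h x - h a) / h a) := by
        apply hSmono _ _ (harg x hx)
        have hhx : h x ≤ h ρ := hmono (le_trans ha.le hx.1) hρ0 hx.2
        exact (div_le_div_iff_of_pos_right hapos).mpr (by linarith)
      have h3 : 0 ≤ φ x := hφnn x (le_trans ha.le hx.1)
      nlinarith
    calc Sρ * (h ρ ^ (θ + 1) - h a ^ (θ + 1))
        = ∫ s in a..ρ, Sρ * φ s := by
          rw [intervalIntegral.integral_const_mul, ftc a ρ ha.le hρ]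
      _ ≤ ∫ s in a..ρ, h s ^ θ * w s :=
          intervalIntegral.integral_mono_on hρ hφint hwint2 hmono2
  have hha : 0 ≤ h a ^ (θ + 1) := Real.rpow_nonneg hapos.le _
  rw [hsplit, hval1]
  nlinarith [hval2]
end

section
/- Let θ > 1 and R > 0, let h : (0, R] → (0, ∞) be continuous, and suppose there exist constants K > 0 and δ₀ ∈ (0, R] such that |h(s) − s| ≤ K·s² for all s ∈ (0, δ₀]. Then lim_{a → 0⁺} a^{θ−1} · ∫_a^R h(s)^{−θ} ds = 1/(θ − 1). -/
open Filter Topology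

set_option maxHeartbeats 1000000 in
theorem stmt7 (θ R : ℝ) (hθ : 1 < θ) (hR : 0 < R) (h : ℝ → ℝ)
    (hcont : ContinuousOn h (Set.Ioc 0 R))
    (hpos : ∀ s ∈ Set.Ioc (0:ℝ) R, 0 < h s)
    (K δ₀ : ℝ) (hK : 0 < K) (hδ₀ : 0 < δ₀) (hδ₀R : δ₀ ≤ R)
    (happrox : ∀ s ∈ Set.Ioc (0:ℝ) δ₀, |h s - s| ≤ K * s ^ 2) :
    Tendsto (fun a : ℝ => a ^ (θ - 1) * ∫ s in a..R, (h s) ^ (-θ))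
      (nhdsWithin 0 (Set.Ioi 0)) (nhds (1 / (θ - 1))) := by
  have hθ1 : (0:ℝ) < θ - 1 := by linarith
  have hθne : θ - 1 ≠ 0 := ne_of_gt hθ1
  have hφcont : ContinuousOn (fun s => h s ^ (-θ)) (Set.Ioc 0 R) :=
    hcont.rpow_const (fun x hx => Or.inl (hpos x hx).ne')
  rw [Metric.tendsto_nhdsWithin_nhds]
  intro ε hε
  have hε' : 0 < ε * (θ - 1) / 2 := by positivity
  -- choose δ
  have hf1 : Tendsto (fun t : ℝ => (1 - K * t) ^ (-θ)) (𝓝 0) (𝓝 1) := by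
    have hc : ContinuousAt (fun t : ℝ => (1 - K * t) ^ (-θ)) 0 := by
      apply ContinuousAt.rpow_const (by fun_prop)
      left; norm_num
    simpa using hc.tendsto
  have hf2 : Tendsto (fun t : ℝ => (1 + K * t) ^ (-θ)) (𝓝 0) (𝓝 1) := by
    have hc : ContinuousAt (fun t : ℝ => (1 + K * t) ^ (-θ)) 0 := by
      apply ContinuousAt.rpow_const (by fun_prop)
      left; norm_num
    simpa using hc.tendsto
  have h1 : ∀ᶠ t in 𝓝 (0:ℝ), (1 - K * t) ^ (-θ) < 1 + ε * (θ - 1) / 2 :=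
    hf1.eventually_lt_const (by linarith)
  have h2 : ∀ᶠ t in 𝓝 (0:ℝ), 1 - ε * (θ - 1) / 2 < (1 + K * t) ^ (-θ) :=
    hf2.eventually_const_lt (by linarith)
  have h3 : ∀ᶠ t in 𝓝 (0:ℝ), t < δ₀ :=
    Filter.Tendsto.eventually_lt_const hδ₀ tendsto_id
  have h4 : ∀ᶠ t in 𝓝 (0:ℝ), t < K⁻¹ :=
    Filter.Tendsto.eventually_lt_const (by positivity) tendsto_id
  have hmem : ∀ᶠ t in 𝓝[>] (0:ℝ), 0 < t :=
    eventually_mem_nhdsWithin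
  obtain ⟨δ, hδpos, hA, hB, hδδ₀, hδK⟩ :=
    (hmem.and (((h1.and (h2.and (h3.and h4)))).filter_mono nhdsWithin_le_nhds)).exists
  have hKδ : K * δ < 1 := by
    have := mul_lt_mul_of_pos_left hδK hK
    rwa [mul_inv_cancel₀ hK.ne'] at this
  have h1Kδ : (0:ℝ) < 1 - K * δ := by linarith
  have hδR : δ < R := lt_of_lt_of_le hδδ₀ hδ₀R
  set cp : ℝ := (1 - K * δ) ^ (-θ) with hcp
  set cm : ℝ := (1 + K * δ) ^ (-θ) with hcm
  have hcp0 : 0 ≤ cp := Real.rpow_nonneg h1Kδ.le _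
  have hcm1 : cm ≤ 1 :=
    Real.rpow_le_one_of_one_le_of_nonpos (by nlinarith) (by linarith)
  -- bound on the tail integral
  have hIccsub : Set.Icc δ R ⊆ Set.Ioc 0 R := fun x hx => ⟨lt_of_lt_of_le hδpos hx.1, hx.2⟩
  obtain ⟨M, hM⟩ := (isCompact_Icc : IsCompact (Set.Icc δ R)).exists_bound_of_continuousOn
    (hφcont.mono hIccsub)
  have hM0 : 0 ≤ M := le_trans (norm_nonneg _) (hM δ ⟨le_refl δ, hδR.le⟩)
  have hint2 : IntervalIntegrable (fun s => h s ^ (-θ)) MeasureTheory.volume δ R := by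
    apply ContinuousOn.intervalIntegrable
    apply hφcont.mono
    rw [Set.uIcc_of_le hδR.le]
    exact hIccsub
  have hE0 : 0 ≤ ∫ s in δ..R, h s ^ (-θ) := by
    apply intervalIntegral.integral_nonneg hδR.le
    intro x hx
    exact Real.rpow_nonneg (hpos x (hIccsub hx)).le _
  have hEM : (∫ s in δ..R, h s ^ (-θ)) ≤ M * (R - δ) := by
    have := intervalIntegral.norm_integral_le_of_norm_le_const
      (C := M) (f := fun s => h s ^ (-θ)) (a := δ) (b := R) ?_
    · calc (∫ s in δ..R, h s ^ (-θ)) ≤ |∫ s in δ..R, h s ^ (-θ)| := le_abs_self _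
        _ ≤ M * |R - δ| := this
        _ = M * (R - δ) := by rw [abs_of_nonneg (by linarith)]
    · intro x hx
      rw [Set.uIoc_of_le hδR.le] at hx
      exact hM x ⟨hx.1.le, hx.2⟩
  -- threshold for a
  set C : ℝ := M * (R - δ) + δ ^ (1 - θ) / (θ - 1) with hCdef
  have hC0 : 0 ≤ C :=
    add_nonneg (mul_nonneg hM0 (by linarith))
      (le_of_lt (div_pos (Real.rpow_pos_of_pos hδpos _) hθ1))
  have hrt : Tendsto (fun a : ℝ => a ^ (θ - 1)) (𝓝[>] (0:ℝ)) (𝓝 0) := by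
    have hc : ContinuousAt (fun a : ℝ => a ^ (θ - 1)) 0 :=
      Real.continuousAt_rpow_const 0 _ (Or.inr hθ1.le)
    have := hc.continuousWithinAt (s := Set.Ioi (0:ℝ))
    rw [ContinuousWithinAt] at this
    simpa [Real.zero_rpow hθne] using this
  have hT : Tendsto (fun a : ℝ => a ^ (θ - 1) * C) (𝓝[>] (0:ℝ)) (𝓝 0) := by
    simpa using hrt.mul_const C
  have hevA : ∀ᶠ a in 𝓝[>] (0:ℝ), a ^ (θ - 1) * C < ε / 2 :=
    hT.eventually_lt_const (half_pos hε)
  have hevB : ∀ᶠ a in 𝓝[>] (0:ℝ), a < δ :=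
    (Filter.Tendsto.eventually_lt_const hδpos tendsto_id).filter_mono nhdsWithin_le_nhds
  have hkey : {a : ℝ | a < δ ∧ a ^ (θ - 1) * C < ε / 2} ∈ 𝓝[>] (0:ℝ) := hevB.and hevA
  obtain ⟨δ', hδ'pos, hsub⟩ := Metric.mem_nhdsWithin_iff.1 hkey
  refine ⟨δ', hδ'pos, ?_⟩
  intro a ha hdist
  obtain ⟨haδ, haC⟩ := hsub ⟨Metric.mem_ball.2 hdist, ha⟩
  have ha0 : 0 < a := ha
  have hP : 0 < a ^ (θ - 1) := Real.rpow_pos_of_pos ha0 _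
  -- integrability on [a, δ]
  have hIccsub1 : Set.Icc a δ ⊆ Set.Ioc 0 R :=
    fun x hx => ⟨lt_of_lt_of_le ha0 hx.1, le_trans hx.2 hδR.le⟩
  have hint1 : IntervalIntegrable (fun s => h s ^ (-θ)) MeasureTheory.volume a δ := by
    apply ContinuousOn.intervalIntegrable
    apply hφcont.mono
    rw [Set.uIcc_of_le haδ.le]
    exact hIccsub1
  have hintP : IntervalIntegrable (fun s : ℝ => s ^ (-θ)) MeasureTheory.volume a δ := by
    apply ContinuousOn.intervalIntegrable
    apply ContinuousOn.rpow_const continuousOn_id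
    intro x hx
    rw [Set.uIcc_of_le haδ.le] at hx
    exact Or.inl (ne_of_gt (lt_of_lt_of_le ha0 hx.1))
  -- split the integral
  have hsplit : (∫ s in a..R, h s ^ (-θ)) =
      (∫ s in a..δ, h s ^ (-θ)) + ∫ s in δ..R, h s ^ (-θ) :=
    (intervalIntegral.integral_add_adjacent_intervals hint1 hint2).symm
  -- pointwise bounds on [a, δ]
  have hbound : ∀ s ∈ Set.Icc a δ,
      cm * s ^ (-θ) ≤ h s ^ (-θ) ∧ h s ^ (-θ) ≤ cp * s ^ (-θ) := by
    intro s hs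
    have hs0 : 0 < s := lt_of_lt_of_le ha0 hs.1
    have hsδ₀ : s ≤ δ₀ := le_trans hs.2 hδδ₀.le
    have habs := happrox s ⟨hs0, hsδ₀⟩
    rw [abs_le] at habs
    have hKs : K * s ≤ K * δ := mul_le_mul_of_nonneg_left hs.2 hK.le
    have hlow : s * (1 - K * δ) ≤ h s := by nlinarith [habs.1]
    have hup : h s ≤ s * (1 + K * δ) := by nlinarith [habs.2]
    have hhs0 : 0 < h s := hpos s (hIccsub1 hs)
    constructor
    · have := Real.rpow_le_rpow_of_nonpos hhs0 hup (by linarith : -θ ≤ 0)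
      rwa [Real.mul_rpow hs0.le (by positivity : (0:ℝ) ≤ 1 + K * δ),
        mul_comm (s ^ (-θ))] at this
    · have hb0 : 0 < s * (1 - K * δ) := by positivity
      have := Real.rpow_le_rpow_of_nonpos hb0 hlow (by linarith : -θ ≤ 0)
      rwa [Real.mul_rpow hs0.le h1Kδ.le, mul_comm (s ^ (-θ))] at this
  -- integral bounds on [a, δ]
  have hlowI : cm * (∫ s in a..δ, (s:ℝ) ^ (-θ)) ≤ ∫ s in a..δ, h s ^ (-θ) := by
    rw [← intervalIntegral.integral_const_mul]
    exact intervalIntegral.integral_mono_on haδ.le (hintP.const_mul cm) hint1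
      (fun x hx => (hbound x hx).1)
  have hupI : (∫ s in a..δ, h s ^ (-θ)) ≤ cp * ∫ s in a..δ, (s:ℝ) ^ (-θ) := by
    rw [← intervalIntegral.integral_const_mul]
    exact intervalIntegral.integral_mono_on haδ.le hint1 (hintP.const_mul cp)
      (fun x hx => (hbound x hx).2)
  -- value of the model integral
  have hJint : (∫ s in a..δ, (s:ℝ) ^ (-θ)) = (δ ^ (-θ + 1) - a ^ (-θ + 1)) / (-θ + 1) := by
    apply integral_rpow
    refine Or.inr ⟨by linarith, ?_⟩
    rw [Set.uIcc_of_le haδ.le]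
    intro hx
    exact absurd hx.1 (by linarith)
  have hpow : a ^ (θ - 1) * a ^ (-θ + 1) = 1 := by
    rw [← Real.rpow_add ha0]
    norm_num
  have hne2 : (-θ + 1 : ℝ) ≠ 0 := by intro hh; exact hθne (by linarith)
  have hJval : a ^ (θ - 1) * (∫ s in a..δ, (s:ℝ) ^ (-θ)) =
      (1 - a ^ (θ - 1) * δ ^ (1 - θ)) / (θ - 1) := by
    rw [hJint, show (1 - θ) = (-θ + 1) by ring]
    calc a ^ (θ - 1) * ((δ ^ (-θ + 1) - a ^ (-θ + 1)) / (-θ + 1))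
        = (a ^ (θ - 1) * δ ^ (-θ + 1) - a ^ (θ - 1) * a ^ (-θ + 1)) / (-θ + 1) := by ring
      _ = (a ^ (θ - 1) * δ ^ (-θ + 1) - 1) / (-θ + 1) := by rw [hpow]
      _ = (1 - a ^ (θ - 1) * δ ^ (-θ + 1)) / (θ - 1) := by
          rw [div_eq_div_iff hne2 hθne]; ring
  set t : ℝ := a ^ (θ - 1) * δ ^ (1 - θ) with htdef
  have ht0 : 0 ≤ t := mul_nonneg hP.le (Real.rpow_nonneg hδpos.le _)
  have hPC : a ^ (θ - 1) * C = a ^ (θ - 1) * (M * (R - δ)) + t / (θ - 1) := by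
    rw [hCdef, htdef]; ring
  rw [Real.dist_eq, abs_lt]
  have key1 : a ^ (θ - 1) * (∫ s in a..δ, h s ^ (-θ)) ≤
      cp * ((1 - t) / (θ - 1)) := by
    calc a ^ (θ - 1) * (∫ s in a..δ, h s ^ (-θ))
        ≤ a ^ (θ - 1) * (cp * ∫ s in a..δ, (s:ℝ) ^ (-θ)) :=
          mul_le_mul_of_nonneg_left hupI hP.le
      _ = cp * (a ^ (θ - 1) * ∫ s in a..δ, (s:ℝ) ^ (-θ)) := by ring
      _ = cp * ((1 - t) / (θ - 1)) := by rw [hJval]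
  have key2 : cm * ((1 - t) / (θ - 1)) ≤
      a ^ (θ - 1) * (∫ s in a..δ, h s ^ (-θ)) := by
    calc cm * ((1 - t) / (θ - 1))
        = cm * (a ^ (θ - 1) * ∫ s in a..δ, (s:ℝ) ^ (-θ)) := by rw [hJval]
      _ = a ^ (θ - 1) * (cm * ∫ s in a..δ, (s:ℝ) ^ (-θ)) := by ring
      _ ≤ a ^ (θ - 1) * (∫ s in a..δ, h s ^ (-θ)) :=
          mul_le_mul_of_nonneg_left hlowI hP.le
  have key3 : 0 ≤ a ^ (θ - 1) * ∫ s in δ..R, h s ^ (-θ) := mul_nonneg hP.le hE0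
  have key4 : a ^ (θ - 1) * (∫ s in δ..R, h s ^ (-θ)) ≤ a ^ (θ - 1) * (M * (R - δ)) :=
    mul_le_mul_of_nonneg_left hEM hP.le
  have hcm0 : 0 ≤ cm := Real.rpow_nonneg (by nlinarith [mul_pos hK hδpos]) _
  have hexp : a ^ (θ - 1) * ((∫ s in a..δ, h s ^ (-θ)) + ∫ s in δ..R, h s ^ (-θ)) =
      a ^ (θ - 1) * (∫ s in a..δ, h s ^ (-θ)) +
      a ^ (θ - 1) * (∫ s in δ..R, h s ^ (-θ)) := by ring
  rw [hsplit, hexp]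
  have hcpt : 0 ≤ cp * t / (θ - 1) := by positivity
  have hcmt : cm * t ≤ t := by nlinarith
  have hAq : cp / (θ - 1) < 1 / (θ - 1) + ε / 2 := by
    rw [div_lt_iff₀ hθ1]
    have h5 : (1 / (θ - 1)) * (θ - 1) = 1 := by field_simp
    nlinarith [h5, hA]
  have hBq : 1 / (θ - 1) - ε / 2 < cm / (θ - 1) := by
    have h6 : (1 - ε * (θ - 1) / 2) / (θ - 1) < cm / (θ - 1) :=
      (div_lt_div_iff_of_pos_right hθ1).mpr hB
    have h7 : (1 - ε * (θ - 1) / 2) / (θ - 1) = 1 / (θ - 1) - ε / 2 := by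
      field_simp
    linarith
  have hPM0 : 0 ≤ a ^ (θ - 1) * (M * (R - δ)) :=
    mul_nonneg hP.le (mul_nonneg hM0 (by linarith))
  have htθ0 : 0 ≤ t / (θ - 1) := div_nonneg ht0 hθ1.le
  have htεhalf : t / (θ - 1) < ε / 2 := by linarith
  have hu2 : a ^ (θ - 1) * (M * (R - δ)) < ε / 2 := by linarith
  have u1 : cp * ((1 - t) / (θ - 1)) = cp / (θ - 1) - cp * t / (θ - 1) := by ring
  have l1 : cm * ((1 - t) / (θ - 1)) = cm / (θ - 1) - cm * t / (θ - 1) := by ring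
  have l2 : cm * t / (θ - 1) ≤ t / (θ - 1) :=
    (div_le_div_iff_of_pos_right hθ1).mpr hcmt
  constructor
  · linarith
  · linarith
end

section
/- Let R > 0, let h : (0, R] → (0, ∞) be continuous, and suppose there exist constants K > 0 and δ₀ ∈ (0, R] such that |h(s) − s| ≤ K·s² for all s ∈ (0, δ₀]. Then lim_{a → 0⁺} (∫_a^R h(s)^{−1} ds) / |log a| = 1. -/
open Filter

set_option maxHeartbeats 1000000 in
theorem stmt8 (R : ℝ) (hR : 0 < R) (h : ℝ → ℝ)
    (hcont : ContinuousOn h (Set.Ioc 0 R))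
    (hpos : ∀ s ∈ Set.Ioc (0:ℝ) R, 0 < h s)
    (K δ₀ : ℝ) (hK : 0 < K) (hδ₀ : 0 < δ₀) (hδ₀R : δ₀ ≤ R)
    (happrox : ∀ s ∈ Set.Ioc (0:ℝ) δ₀, |h s - s| ≤ K * s ^ 2) :
    Tendsto (fun a : ℝ => (∫ s in a..R, (h s)⁻¹) / |Real.log a|)
      (nhdsWithin 0 (Set.Ioi 0)) (nhds 1) := by
  have hint : ∀ a b : ℝ, 0 < a → a ≤ b → b ≤ R →
      IntervalIntegrable (fun s => (h s)⁻¹) MeasureTheory.volume a b := by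
    intro a b ha hab hbR
    apply ContinuousOn.intervalIntegrable
    have hsub : Set.uIcc a b ⊆ Set.Ioc 0 R := by
      rw [Set.uIcc_of_le hab]
      intro x hx
      exact ⟨lt_of_lt_of_le ha hx.1, le_trans hx.2 hbR⟩
    exact ((hcont.mono hsub).inv₀ fun x hx => (hpos x (hsub hx)).ne')
  rw [Metric.tendsto_nhdsWithin_nhds]
  intro ε hε
  set ε' := min ε 1 with hε'def
  have hε'pos : 0 < ε' := lt_min hε one_pos
  have hε'1 : ε' ≤ 1 := min_le_right _ _
  have hε'ε : ε' ≤ ε := min_le_left _ _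
  set δ := min δ₀ (min (ε' / (8 * K)) 1) with hδdef
  have hδpos : 0 < δ := lt_min hδ₀ (lt_min (by positivity) one_pos)
  have hδδ₀ : δ ≤ δ₀ := min_le_left _ _
  have hδR : δ ≤ R := hδδ₀.trans hδ₀R
  have hδ1 : δ ≤ 1 := (min_le_right _ _).trans (min_le_right _ _)
  set c := K * δ with hcdef
  have hcpos : 0 < c := mul_pos hK hδpos
  have hc : c ≤ ε' / 8 := by
    have h1 : δ ≤ ε' / (8 * K) := (min_le_right _ _).trans (min_le_left _ _)
    calc c = K * δ := rfl
      _ ≤ K * (ε' / (8 * K)) := by nlinarith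
      _ = ε' / 8 := by field_simp
  have hc1 : c ≤ 1 / 8 := hc.trans (by linarith)
  set C := ∫ s in δ..R, (h s)⁻¹ with hCdef
  have hC0 : 0 ≤ C := by
    apply intervalIntegral.integral_nonneg hδR
    intro x hx
    exact (inv_pos.mpr (hpos x ⟨lt_of_lt_of_le hδpos hx.1, hx.2⟩)).le
  set M := max 1 (4 * (|Real.log δ| + C) / ε') with hMdef
  have hM1 : 1 ≤ M := le_max_left _ _
  refine ⟨min δ (Real.exp (-M)), lt_min hδpos (Real.exp_pos _), ?_⟩
  intro a ha hdist
  simp only [Real.dist_eq, sub_zero] at hdist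
  have ha0 : 0 < a := ha
  rw [abs_of_pos ha0] at hdist
  have haδ : a < δ := lt_of_lt_of_le hdist (min_le_left _ _)
  have haM : a < Real.exp (-M) := lt_of_lt_of_le hdist (min_le_right _ _)
  have hlogaM : Real.log a < -M := by
    calc Real.log a < Real.log (Real.exp (-M)) := Real.log_lt_log ha0 haM
      _ = -M := Real.log_exp _
  set L := -Real.log a with hLdef
  have hLM : M < L := by simp only [hLdef]; linarith
  have hL1 : 1 < L := lt_of_le_of_lt hM1 hLM
  have hL0 : 0 < L := by linarith
  have habs : |Real.log a| = L := abs_of_neg (by linarith : Real.log a < 0)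
  have hML : 4 * (|Real.log δ| + C) / ε' < L := lt_of_le_of_lt (le_max_right _ _) hLM
  have hkey : 4 * (|Real.log δ| + C) < ε' * L := by
    rw [div_lt_iff₀ hε'pos] at hML; linarith
  have hlogδ : Real.log δ ≤ 0 := Real.log_nonpos hδpos.le hδ1
  have hD : Real.log δ - Real.log a = L + Real.log δ := by rw [hLdef]; ring
  have hDpos : 0 < Real.log δ - Real.log a := sub_pos.mpr (Real.log_lt_log ha0 haδ)
  -- pointwise bounds on h
  have hpt : ∀ s ∈ Set.Icc a δ, (1 - c) * s ≤ h s ∧ h s ≤ (1 + c) * s := by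
    intro s hs
    have hs0 : 0 < s := lt_of_lt_of_le ha0 hs.1
    have hsδ : s ≤ δ := hs.2
    have habs' := abs_le.mp (happrox s ⟨hs0, hsδ.trans hδδ₀⟩)
    have hKs : K * s ^ 2 ≤ c * s := by
      have : K * s ^ 2 = (K * s) * s := by ring
      rw [this, hcdef]
      exact mul_le_mul_of_nonneg_right (mul_le_mul_of_nonneg_left hsδ hK.le) hs0.le
    constructor <;> nlinarith [habs'.1, habs'.2]
  -- integrability of s⁻¹ on [a, δ]
  have hinvint : IntervalIntegrable (fun s : ℝ => s⁻¹) MeasureTheory.volume a δ := by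
    apply ContinuousOn.intervalIntegrable
    apply ContinuousOn.inv₀ continuousOn_id
    intro x hx
    rw [Set.uIcc_of_le haδ.le] at hx
    exact ne_of_gt (lt_of_lt_of_le ha0 hx.1)
  have hlogint : ∫ s in a..δ, s⁻¹ = Real.log δ - Real.log a := by
    rw [integral_inv]
    · rw [Real.log_div hδpos.ne' ha0.ne']
    · rw [Set.uIcc_of_le haδ.le]
      intro hx
      exact absurd hx.1 (not_le.mpr ha0)
  have h1c : (0:ℝ) < 1 - c := by linarith
  have h1c' : (0:ℝ) < 1 + c := by linarith
  have hinv1 : (1 - c)⁻¹ ≤ 1 + 2 * c := by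
    rw [inv_eq_one_div, div_le_iff₀ h1c]; nlinarith
  have hinv2 : 1 - c ≤ (1 + c)⁻¹ := by
    rw [inv_eq_one_div, le_div_iff₀ h1c']; nlinarith
  -- integral bounds
  have hlow : (1 + c)⁻¹ * (Real.log δ - Real.log a) ≤ ∫ s in a..δ, (h s)⁻¹ := by
    have hmono : ∫ s in a..δ, (1 + c)⁻¹ * s⁻¹ ≤ ∫ s in a..δ, (h s)⁻¹ := by
      apply intervalIntegral.integral_mono_on haδ.le (hinvint.const_mul _)
        (hint a δ ha0 haδ.le hδR)
      intro x hx
      have hx0 : 0 < x := lt_of_lt_of_le ha0 hx.1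
      have hhx : 0 < h x := hpos x ⟨hx0, hx.2.trans hδR⟩
      rw [← mul_inv]
      exact inv_anti₀ hhx ((hpt x hx).2)
    rwa [intervalIntegral.integral_const_mul, hlogint] at hmono
  have hupp : (∫ s in a..δ, (h s)⁻¹) ≤ (1 - c)⁻¹ * (Real.log δ - Real.log a) := by
    have hmono : ∫ s in a..δ, (h s)⁻¹ ≤ ∫ s in a..δ, (1 - c)⁻¹ * s⁻¹ := by
      apply intervalIntegral.integral_mono_on haδ.le (hint a δ ha0 haδ.le hδR)
        (hinvint.const_mul _)
      intro x hx
      have hx0 : 0 < x := lt_of_lt_of_le ha0 hx.1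
      have hlb := (hpt x hx).1
      have hlb0 : 0 < (1 - c) * x := mul_pos h1c hx0
      rw [← mul_inv]
      exact inv_anti₀ hlb0 hlb
    rwa [intervalIntegral.integral_const_mul, hlogint] at hmono
  have hsplit : ∫ s in a..R, (h s)⁻¹ = (∫ s in a..δ, (h s)⁻¹) + C :=
    (intervalIntegral.integral_add_adjacent_intervals (hint a δ ha0 haδ.le hδR)
      (hint δ R hδpos hδR le_rfl)).symm
  set I := ∫ s in a..R, (h s)⁻¹ with hIdef
  have hDpos' : 0 < L + Real.log δ := by rw [← hD]; exact hDpos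
  have hIup : I < (1 + ε') * L := by
    rw [hsplit]
    have h1 : (∫ s in a..δ, (h s)⁻¹) ≤ (1 + 2 * c) * (L + Real.log δ) := by
      calc (∫ s in a..δ, (h s)⁻¹) ≤ (1 - c)⁻¹ * (Real.log δ - Real.log a) := hupp
        _ = (1 - c)⁻¹ * (L + Real.log δ) := by rw [hD]
        _ ≤ (1 + 2 * c) * (L + Real.log δ) :=
            mul_le_mul_of_nonneg_right hinv1 hDpos'.le
    have h2 : (1 + 2 * c) * (L + Real.log δ) ≤ (1 + 2 * c) * L := by nlinarith
    nlinarith [abs_nonneg (Real.log δ)]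
  have hIlo : (1 - ε') * L < I := by
    rw [hsplit]
    have h1 : (1 - c) * (L + Real.log δ) ≤ ∫ s in a..δ, (h s)⁻¹ := by
      calc (1 - c) * (L + Real.log δ) ≤ (1 + c)⁻¹ * (L + Real.log δ) :=
            mul_le_mul_of_nonneg_right hinv2 hDpos'.le
        _ = (1 + c)⁻¹ * (Real.log δ - Real.log a) := by rw [hD]
        _ ≤ _ := hlow
    have h3 : -|Real.log δ| ≤ Real.log δ := neg_abs_le _
    nlinarith
  rw [Real.dist_eq, habs, abs_lt]
  constructor
  · have : 1 - ε' < I / L := by rw [lt_div_iff₀ hL0]; linarith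
    linarith
  · have : I / L < 1 + ε' := by rw [div_lt_iff₀ hL0]; linarith
    linarith
end

section
/- Let m ≥ 3 be an integer, let h : (0, ∞) → (0, ∞) be continuous and non-decreasing, suppose there exist constants K > 0 and δ₀ > 0 such that |h(s) − s| ≤ K·s² for all s ∈ (0, δ₀], and suppose ∫₁^∞ h(s)^{1−m} ds < ∞. Then lim_{a → 0⁺} a^{−2} · h(a)^m · ∫_a^∞ h(s)^{1−m} ds = 1/(m − 2). -/
open Filter MeasureTheory Topology

private lemma stmt9_contOn {h : ℝ → ℝ} (hcont : ContinuousOn h (Set.Ioi 0))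
    (hpos : ∀ s : ℝ, 0 < s → 0 < h s) {s : Set ℝ} (hs : s ⊆ Set.Ioi 0) (p : ℝ) :
    ContinuousOn (fun x => h x ^ p) s :=
  (hcont.mono hs).rpow_const fun x hx => Or.inl (hpos x (hs hx)).ne'

private lemma stmt9_int_Ioc {h : ℝ → ℝ} (hcont : ContinuousOn h (Set.Ioi 0))
    (hpos : ∀ s : ℝ, 0 < s → 0 < h s) {a b : ℝ} (ha : 0 < a) (p : ℝ) :
    IntegrableOn (fun x => h x ^ p) (Set.Ioc a b) := by
  rcases le_or_gt a b with hab | hab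
  · have hsub : Set.Icc a b ⊆ Set.Ioi 0 := fun x hx => lt_of_lt_of_le ha hx.1
    exact ((stmt9_contOn hcont hpos hsub p).integrableOn_Icc).mono_set
      Set.Ioc_subset_Icc_self
  · rw [Set.Ioc_eq_empty_of_le hab.le]
    exact integrableOn_empty

private lemma stmt9_int_Ioi {m : ℕ} {h : ℝ → ℝ} (hcont : ContinuousOn h (Set.Ioi 0))
    (hpos : ∀ s : ℝ, 0 < s → 0 < h s)
    (hint : IntegrableOn (fun s : ℝ => (h s) ^ (1 - (m : ℝ))) (Set.Ioi 1))
    {a : ℝ} (ha : 0 < a) :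
    IntegrableOn (fun x => h x ^ (1 - (m : ℝ))) (Set.Ioi a) := by
  rcases le_or_gt a 1 with h1 | h1
  · rw [← Set.Ioc_union_Ioi_eq_Ioi h1]
    exact (stmt9_int_Ioc hcont hpos ha _).union hint
  · exact hint.mono_set (Set.Ioi_subset_Ioi h1.le)

set_option maxHeartbeats 1000000 in
private lemma stmt9_keyB (m : ℕ) (hm : 3 ≤ m) (h : ℝ → ℝ)
    (hcont : ContinuousOn h (Set.Ioi 0))
    (hpos : ∀ s : ℝ, 0 < s → 0 < h s)
    (K δ₀ : ℝ) (hK : 0 < K) (hδ₀ : 0 < δ₀)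
    (happrox : ∀ s ∈ Set.Ioc (0:ℝ) δ₀, |h s - s| ≤ K * s ^ 2)
    (hint : IntegrableOn (fun s : ℝ => (h s) ^ (1 - (m : ℝ))) (Set.Ioi 1)) :
    Tendsto (fun a : ℝ => a ^ ((m : ℝ) - 2) * ∫ s in Set.Ioi a, (h s) ^ (1 - (m : ℝ)))
      (nhdsWithin 0 (Set.Ioi 0)) (nhds (1 / ((m : ℝ) - 2))) := by
  set M : ℝ := (m : ℝ) with hMdef
  have hM3 : (3:ℝ) ≤ M := by rw [hMdef]; exact_mod_cast hm
  have hM2 : (1:ℝ) ≤ M - 2 := by linarith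
  have hM2pos : (0:ℝ) < M - 2 := by linarith
  rw [Metric.tendsto_nhdsWithin_nhds]
  intro ε hε
  -- choose δ small
  have hlim1 : Tendsto (fun t : ℝ => (1 - K * t) ^ (1 - M)) (𝓝 0) (𝓝 1) := by
    have hb : Tendsto (fun t : ℝ => 1 - K * t) (𝓝 0) (𝓝 1) := by
      have hc : Continuous fun t : ℝ => 1 - K * t := by fun_prop
      simpa using hc.tendsto (0:ℝ)
    simpa using hb.rpow_const (Or.inl one_ne_zero)
  have hlim2 : Tendsto (fun t : ℝ => (1 + K * t) ^ (1 - M)) (𝓝 0) (𝓝 1) := by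
    have hb : Tendsto (fun t : ℝ => 1 + K * t) (𝓝 0) (𝓝 1) := by
      have hc : Continuous fun t : ℝ => 1 + K * t := by fun_prop
      simpa using hc.tendsto (0:ℝ)
    simpa using hb.rpow_const (Or.inl one_ne_zero)
  have hev1 := (Metric.tendsto_nhds.mp hlim1 (ε/2) (half_pos hε)).filter_mono
    (nhdsWithin_le_nhds (s := Set.Ioi (0:ℝ)))
  have hev2 := (Metric.tendsto_nhds.mp hlim2 (ε/2) (half_pos hε)).filter_mono
    (nhdsWithin_le_nhds (s := Set.Ioi (0:ℝ)))
  have hball : Set.Ioo (0:ℝ) (min δ₀ (min (1/(2*K)) 1)) ∈ nhdsWithin (0:ℝ) (Set.Ioi 0) :=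
    Ioo_mem_nhdsGT_of_mem ⟨le_rfl, by positivity⟩
  obtain ⟨δ, ⟨hdc1, hdc2⟩, hδIoo⟩ :=
    ((hev1.and hev2).and (eventually_of_mem hball (fun x hx => hx))).exists
  have hδ0 : 0 < δ := hδIoo.1
  have hδlt := hδIoo.2
  have hδδ₀ : δ < δ₀ := lt_of_lt_of_le hδlt (min_le_left _ _)
  have hδK : δ < 1/(2*K) := lt_of_lt_of_le hδlt ((min_le_right _ _).trans (min_le_left _ _))
  have hδ1 : δ < 1 := lt_of_lt_of_le hδlt ((min_le_right _ _).trans (min_le_right _ _))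
  have hKδ : K * δ < 1/2 := by
    have := (lt_div_iff₀ (by positivity : (0:ℝ) < 2*K)).mp hδK
    nlinarith
  have h1Kδ : 0 < 1 - K * δ := by linarith
  have h1Kδ' : (0:ℝ) < 1 + K * δ := by positivity
  set cp : ℝ := (1 - K * δ) ^ (1 - M) with hcpdef
  set cm : ℝ := (1 + K * δ) ^ (1 - M) with hcmdef
  have hcp0 : 0 < cp := Real.rpow_pos_of_pos h1Kδ _
  have hcm0 : 0 < cm := Real.rpow_pos_of_pos h1Kδ' _
  rw [Real.dist_eq] at hdc1 hdc2
  have hcp : cp < 1 + ε/2 := by have := (abs_lt.mp hdc1).2; linarith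
  have hcm : 1 - ε/2 < cm := by have := (abs_lt.mp hdc2).1; linarith
  set C : ℝ := ∫ s in Set.Ioi δ, h s ^ (1 - M) with hCdef
  have hC0 : 0 ≤ C :=
    setIntegral_nonneg measurableSet_Ioi
      fun x hx => Real.rpow_nonneg (hpos x (lt_trans hδ0 hx)).le _
  set D : ℝ := C + 1/δ + 1 with hDdef
  have hD0 : 0 < D := by positivity
  refine ⟨min δ (ε/(2*D)), lt_min hδ0 (by positivity), ?_⟩
  intro a haI hdista
  have ha0 : 0 < a := haI
  have haη : a < min δ (ε/(2*D)) := by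
    rwa [Real.dist_eq, sub_zero, abs_of_pos ha0] at hdista
  have haδ : a < δ := lt_of_lt_of_le haη (min_le_left _ _)
  have haε : a < ε/(2*D) := lt_of_lt_of_le haη (min_le_right _ _)
  have ha1 : a ≤ 1 := (haδ.trans hδ1).le
  -- integrability
  have intJ : IntegrableOn (fun x => h x ^ (1 - M)) (Set.Ioc a δ) :=
    stmt9_int_Ioc hcont hpos ha0 _
  have intC : IntegrableOn (fun x => h x ^ (1 - M)) (Set.Ioi δ) :=
    stmt9_int_Ioi hcont hpos hint hδ0
  have intP : IntegrableOn (fun x : ℝ => x ^ (1 - M)) (Set.Ioc a δ) := by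
    refine ((ContinuousOn.rpow_const continuousOn_id ?_).integrableOn_Icc).mono_set
      Set.Ioc_subset_Icc_self
    intro x hx
    exact Or.inl (ne_of_gt (lt_of_lt_of_le ha0 hx.1))
  have intPp : IntegrableOn (fun x : ℝ => cp * x ^ (1 - M)) (Set.Ioc a δ) :=
    intP.const_mul _
  have intPm : IntegrableOn (fun x : ℝ => cm * x ^ (1 - M)) (Set.Ioc a δ) :=
    intP.const_mul _
  -- split
  set J : ℝ := ∫ s in Set.Ioc a δ, h s ^ (1 - M) with hJdef
  have hsplit : (∫ s in Set.Ioi a, h s ^ (1 - M)) = J + C := by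
    rw [← Set.Ioc_union_Ioi_eq_Ioi haδ.le,
      setIntegral_union (Set.Ioc_disjoint_Ioi le_rfl) measurableSet_Ioi intJ intC]
  -- value of P
  set P : ℝ := ∫ s in Set.Ioc a δ, s ^ (1 - M) with hPdef
  have hPval : P = (δ ^ (2 - M) - a ^ (2 - M)) / (2 - M) := by
    rw [hPdef, ← intervalIntegral.integral_of_le haδ.le,
      integral_rpow (Or.inr ⟨by intro hc; rw [sub_eq_iff_eq_add] at hc; norm_num at hc; linarith,
        by rw [Set.uIcc_of_le haδ.le]; exact fun hmem => absurd hmem.1 (not_le.mpr ha0)⟩)]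
    have he : (1:ℝ) - M + 1 = 2 - M := by ring
    rw [he]
  -- pointwise bounds and integral bounds
  have hJU : J ≤ cp * P := by
    have hmonoInt : J ≤ ∫ s in Set.Ioc a δ, cp * s ^ (1 - M) := by
      refine setIntegral_mono_on intJ intPp measurableSet_Ioc ?_
      intro x hx
      have hx0 : 0 < x := lt_trans ha0 hx.1
      have habs := abs_le.mp (happrox x ⟨hx0, hx.2.trans hδδ₀.le⟩)
      have hlow : (1 - K * δ) * x ≤ h x := by
        nlinarith [habs.1, mul_nonneg (mul_nonneg hK.le (sub_nonneg.mpr hx.2)) hx0.le]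
      calc h x ^ (1 - M) ≤ ((1 - K * δ) * x) ^ (1 - M) :=
            Real.rpow_le_rpow_of_nonpos (by positivity) hlow (by linarith)
        _ = cp * x ^ (1 - M) := Real.mul_rpow h1Kδ.le hx0.le
    calc J ≤ ∫ s in Set.Ioc a δ, cp * s ^ (1 - M) := hmonoInt
      _ = cp * P := by rw [hPdef, integral_const_mul]
  have hJL : cm * P ≤ J := by
    have hmonoInt : (∫ s in Set.Ioc a δ, cm * s ^ (1 - M)) ≤ J := by
      refine setIntegral_mono_on intPm intJ measurableSet_Ioc ?_
      intro x hx
      have hx0 : 0 < x := lt_trans ha0 hx.1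
      have habs := abs_le.mp (happrox x ⟨hx0, hx.2.trans hδδ₀.le⟩)
      have hup : h x ≤ (1 + K * δ) * x := by
        nlinarith [habs.2, mul_nonneg (mul_nonneg hK.le (sub_nonneg.mpr hx.2)) hx0.le]
      calc cm * x ^ (1 - M) = ((1 + K * δ) * x) ^ (1 - M) :=
            (Real.mul_rpow h1Kδ'.le hx0.le).symm
        _ ≤ h x ^ (1 - M) :=
            Real.rpow_le_rpow_of_nonpos (hpos x hx0) hup (by linarith)
    calc cm * P = ∫ s in Set.Ioc a δ, cm * s ^ (1 - M) := by rw [hPdef, integral_const_mul]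
      _ ≤ J := hmonoInt
  -- arithmetic
  set A : ℝ := a ^ (M - 2) with hAdef
  set q : ℝ := (a / δ) ^ (M - 2) with hqdef
  have hA0 : 0 ≤ A := Real.rpow_nonneg ha0.le _
  have hAa : A ≤ a := by
    calc A ≤ a ^ (1:ℝ) := Real.rpow_le_rpow_of_exponent_ge ha0 ha1 hM2
      _ = a := Real.rpow_one _
  have hadδ : a / δ ≤ 1 := (div_le_one hδ0).mpr haδ.le
  have hq0 : 0 ≤ q := Real.rpow_nonneg (by positivity) _
  have hq1 : q ≤ 1 := Real.rpow_le_one (by positivity) hadδ (by linarith)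
  have hqa : q ≤ a / δ := by
    calc q ≤ (a / δ) ^ (1:ℝ) :=
          Real.rpow_le_rpow_of_exponent_ge (by positivity) hadδ hM2
      _ = a / δ := Real.rpow_one _
  have hAP : A * P = (1 - q) / (M - 2) := by
    have e1 : A * (a ^ (2 - M)) = 1 := by
      rw [hAdef, ← Real.rpow_add ha0]
      norm_num
    have e2 : A * (δ ^ (2 - M)) = q := by
      rw [hqdef, hAdef, show (2:ℝ) - M = -(M - 2) by ring, Real.rpow_neg hδ0.le,
        Real.div_rpow ha0.le hδ0.le]
      rw [div_eq_mul_inv]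
    rw [hPval]
    have expand : A * ((δ ^ (2 - M) - a ^ (2 - M)) / (2 - M))
        = (A * (δ ^ (2 - M)) - A * (a ^ (2 - M))) / (2 - M) := by ring
    rw [expand, e1, e2, show (2:ℝ) - M = -(M - 2) by ring, div_neg, ← neg_div, neg_sub]
  -- smallness facts
  have haD : a * D < ε / 2 := by
    have := mul_lt_mul_of_pos_right haε hD0
    calc a * D < ε / (2 * D) * D := this
      _ = ε / 2 := by field_simp
  have hexpD : a * D = a * C + a * (1/δ) + a := by rw [hDdef]; ring
  have hnn1 : 0 ≤ a * (1/δ) := mul_nonneg ha0.le (by positivity)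
  have hnn2 : 0 ≤ a * C := mul_nonneg ha0.le hC0
  have haC : a * C < ε / 2 := by linarith
  have haq : a / δ < ε / 2 := by
    have hrw : a / δ = a * (1/δ) := by ring
    linarith [hrw.ge, hrw.le]
  have hqε : q < ε / 2 := lt_of_le_of_lt hqa haq
  have h1qnn : 0 ≤ (1 - q) / (M - 2) := div_nonneg (by linarith) (by linarith)
  have hAJU : A * J ≤ cp * ((1 - q) / (M - 2)) := by
    calc A * J ≤ A * (cp * P) := mul_le_mul_of_nonneg_left hJU hA0
      _ = cp * (A * P) := by ring
      _ = cp * ((1 - q) / (M - 2)) := by rw [hAP]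
  have hAJL : cm * ((1 - q) / (M - 2)) ≤ A * J := by
    calc cm * ((1 - q) / (M - 2)) = cm * (A * P) := by rw [hAP]
      _ = A * (cm * P) := by ring
      _ ≤ A * J := mul_le_mul_of_nonneg_left hJL hA0
  have hAC : A * C ≤ a * C := mul_le_mul_of_nonneg_right hAa hC0
  have hAC0 : 0 ≤ A * C := mul_nonneg hA0 hC0
  have hinv1 : 1 / (M - 2) ≤ 1 := by
    rw [div_le_one hM2pos]; linarith
  have hinv0 : 0 < 1 / (M - 2) := by positivity
  clear_value M cp cm C D J P A q
  rw [Real.dist_eq, hsplit, abs_lt]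
  constructor
  · -- lower bound
    have hb1 : (1 - ε/2) * ((1 - q) / (M - 2)) ≤ cm * ((1 - q) / (M - 2)) :=
      mul_le_mul_of_nonneg_right hcm.le h1qnn
    have hb2 : (1 - ε/2 - q) / (M - 2) ≤ (1 - ε/2) * ((1 - q) / (M - 2)) := by
      rw [← mul_div_assoc, div_le_div_iff_of_pos_right hM2pos]
      have hqε2 : 0 ≤ (ε/2) * q := mul_nonneg (half_pos hε).le hq0
      have hexp2 : (1 - ε/2) * (1 - q) - (1 - ε/2 - q) = (ε/2) * q := by ring
      linarith only [hqε2, hexp2.ge, hexp2.le]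
    have hb3 : (ε/2 + q) / (M - 2) ≤ ε/2 + q :=
      div_le_self (by linarith) hM2
    have hb4 : (1 - ε/2 - q) / (M - 2) - 1 / (M - 2) = -((ε/2 + q) / (M - 2)) := by
      field_simp
      ring
    have hexpand : A * (J + C) = A * J + A * C := by ring
    linarith only [hAJL, hb1, hb2, hb3, hb4, hAC0, hqε, hexpand.ge, hexpand.le]
  · -- upper bound
    have hb1 : cp * ((1 - q) / (M - 2)) ≤ (1 + ε/2) * ((1 - q) / (M - 2)) :=
      mul_le_mul_of_nonneg_right hcp.le h1qnn
    have hb2 : (1 - q) / (M - 2) ≤ 1 / (M - 2) := by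
      rw [div_le_div_iff_of_pos_right hM2pos]
      linarith
    have hb2' : (1 + ε/2) * ((1 - q) / (M - 2)) ≤ (1 + ε/2) * (1 / (M - 2)) :=
      mul_le_mul_of_nonneg_left hb2 (by linarith)
    have hident : (1 + ε/2) * (1 / (M - 2)) = 1 / (M - 2) + (ε/2) * (1 / (M - 2)) := by
      ring
    have hb3 : (ε/2) * (1 / (M - 2)) ≤ ε/2 := by
      have := mul_le_mul_of_nonneg_left hinv1 (le_of_lt (half_pos hε))
      linarith
    have hexpand : A * (J + C) = A * J + A * C := by ring
    linarith only [hAJU, hb1, hb2', hident.ge, hident.le, hb3, hAC, haC,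
      hexpand.ge, hexpand.le]
  done

theorem stmt9 (m : ℕ) (hm : 3 ≤ m) (h : ℝ → ℝ)
    (hcont : ContinuousOn h (Set.Ioi 0))
    (hpos : ∀ s : ℝ, 0 < s → 0 < h s)
    (hmono : ∀ s t : ℝ, 0 < s → s ≤ t → h s ≤ h t)
    (K δ₀ : ℝ) (hK : 0 < K) (hδ₀ : 0 < δ₀)
    (happrox : ∀ s ∈ Set.Ioc (0:ℝ) δ₀, |h s - s| ≤ K * s ^ 2)
    (hint : IntegrableOn (fun s : ℝ => (h s) ^ (1 - (m : ℝ))) (Set.Ioi 1)) :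
    Tendsto (fun a : ℝ => a ^ (-2 : ℝ) * (h a) ^ (m : ℝ) *
        ∫ s in Set.Ioi a, (h s) ^ (1 - (m : ℝ)))
      (nhdsWithin 0 (Set.Ioi 0)) (nhds (1 / ((m : ℝ) - 2))) := by
  have keyB := stmt9_keyB m hm h hcont hpos K δ₀ hK hδ₀ happrox hint
  -- h a / a → 1
  have hratio : Tendsto (fun a : ℝ => h a / a) (nhdsWithin 0 (Set.Ioi 0)) (nhds 1) := by
    have hlow : Tendsto (fun a : ℝ => 1 - K * a) (nhdsWithin 0 (Set.Ioi 0)) (nhds 1) := by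
      apply tendsto_nhdsWithin_of_tendsto_nhds
      have hc : Continuous fun t : ℝ => 1 - K * t := by fun_prop
      simpa using hc.tendsto (0:ℝ)
    have hup : Tendsto (fun a : ℝ => 1 + K * a) (nhdsWithin 0 (Set.Ioi 0)) (nhds 1) := by
      apply tendsto_nhdsWithin_of_tendsto_nhds
      have hc : Continuous fun t : ℝ => 1 + K * t := by fun_prop
      simpa using hc.tendsto (0:ℝ)
    refine tendsto_of_tendsto_of_tendsto_of_le_of_le' hlow hup ?_ ?_
    · filter_upwards [Ioc_mem_nhdsGT_of_mem (Set.mem_Ico.mpr ⟨le_rfl, hδ₀⟩)] with a ha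
      have ha0 : 0 < a := ha.1
      have habs := abs_le.mp (happrox a ⟨ha0, ha.2⟩)
      rw [le_div_iff₀ ha0]
      nlinarith
    · filter_upwards [Ioc_mem_nhdsGT_of_mem (Set.mem_Ico.mpr ⟨le_rfl, hδ₀⟩)] with a ha
      have ha0 : 0 < a := ha.1
      have habs := abs_le.mp (happrox a ⟨ha0, ha.2⟩)
      rw [div_le_iff₀ ha0]
      nlinarith
  have hratioM : Tendsto (fun a : ℝ => (h a / a) ^ (m : ℝ))
      (nhdsWithin 0 (Set.Ioi 0)) (nhds 1) := by
    have := hratio.rpow_const (p := (m:ℝ)) (Or.inl one_ne_zero)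
    simpa using this
  have hmul := hratioM.mul keyB
  rw [one_mul] at hmul
  refine hmul.congr' ?_
  filter_upwards [self_mem_nhdsWithin] with a (ha : (0:ℝ) < a)
  have hha : 0 < h a := hpos a ha
  have haM : (0:ℝ) < a ^ (m:ℝ) := Real.rpow_pos_of_pos ha _
  rw [Real.div_rpow hha.le ha.le]
  have e1 : a ^ ((m:ℝ) - 2) = a ^ (m:ℝ) * a ^ (-2:ℝ) := by
    rw [show (m:ℝ) - 2 = (m:ℝ) + (-2) from sub_eq_add_neg _ _, Real.rpow_add ha]
  rw [e1]
  field_simp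
end

section
/- Let h : (0, ∞) → (0, ∞) be continuous and non-decreasing, suppose there exist constants K > 0 and δ₀ > 0 such that |h(s) − s| ≤ K·s² for all s ∈ (0, δ₀], and suppose ∫₁^∞ h(s)^{−1} ds < ∞. Then lim_{a → 0⁺} (h(a)² · ∫_a^∞ h(s)^{−1} ds) / (a² · |log a|) = 1. -/
open Filter MeasureTheory

theorem stmt10 (h : ℝ → ℝ)
    (hcont : ContinuousOn h (Set.Ioi 0))
    (hpos : ∀ s : ℝ, 0 < s → 0 < h s)
    (hmono : ∀ s t : ℝ, 0 < s → s ≤ t → h s ≤ h t)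
    (K δ₀ : ℝ) (hK : 0 < K) (hδ₀ : 0 < δ₀)
    (happrox : ∀ s ∈ Set.Ioc (0:ℝ) δ₀, |h s - s| ≤ K * s ^ 2)
    (hint : IntegrableOn (fun s : ℝ => (h s)⁻¹) (Set.Ioi 1)) :
    Tendsto (fun a : ℝ => (h a ^ 2 * ∫ s in Set.Ioi a, (h s)⁻¹) / (a ^ 2 * |Real.log a|))
      (nhdsWithin 0 (Set.Ioi 0)) (nhds 1) := by
  obtain ⟨δ, hδpos, hδδ₀, hδK, hδ1⟩ : ∃ δ : ℝ, 0 < δ ∧ δ ≤ δ₀ ∧ δ ≤ (2*K)⁻¹ ∧ δ ≤ 1 :=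
    ⟨min δ₀ (min (2*K)⁻¹ 1), lt_min hδ₀ (lt_min (by positivity) one_pos), min_le_left _ _,
      (min_le_right _ _).trans (min_le_left _ _), (min_le_right _ _).trans (min_le_right _ _)⟩
  -- lower bound on h near 0
  have hlow : ∀ s ∈ Set.Ioc (0:ℝ) δ, s / 2 ≤ h s := by
    intro s hs
    have h1 := abs_le.mp (happrox s ⟨hs.1, hs.2.trans hδδ₀⟩)
    have h2K : (0:ℝ) < 2*K := by positivity
    have h2 : 2*K*s ≤ 1 := by
      calc 2*K*s ≤ 2*K*(2*K)⁻¹ := by gcongr; exact hs.2.trans hδK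
        _ = 1 := mul_inv_cancel₀ h2K.ne'
    nlinarith [hs.1, h1.1]
  -- pointwise bound
  have hbound : ∀ s ∈ Set.Ioc (0:ℝ) δ, |(h s)⁻¹ - s⁻¹| ≤ 2*K := by
    intro s hs
    have hs0 := hs.1
    have hhs : 0 < h s := hpos s hs0
    have hl := hlow s hs
    have h1 := happrox s ⟨hs0, hs.2.trans hδδ₀⟩
    have key : (h s)⁻¹ - s⁻¹ = (s - h s) / (h s * s) := inv_sub_inv hhs.ne' hs0.ne'
    rw [key, abs_div, abs_of_pos (mul_pos hhs hs0), div_le_iff₀ (mul_pos hhs hs0)]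
    have h2 : |s - h s| ≤ K * s^2 := by rw [abs_sub_comm]; exact h1
    nlinarith [h2, hl, mul_pos hK hs0]
  -- integrability pieces
  have hIntIoc : ∀ a : ℝ, 0 < a → IntegrableOn (fun s => (h s)⁻¹) (Set.Ioc a δ) := by
    intro a ha
    have hc : ContinuousOn (fun s => (h s)⁻¹) (Set.Icc a δ) := by
      apply ContinuousOn.inv₀
      · exact hcont.mono (fun x hx => Set.mem_Ioi.mpr (lt_of_lt_of_le ha hx.1))
      · intro x hx; exact (hpos x (lt_of_lt_of_le ha hx.1)).ne'
    exact hc.integrableOn_Icc.mono_set Set.Ioc_subset_Icc_self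
  have hIntInv : ∀ a : ℝ, 0 < a → IntegrableOn (fun s : ℝ => s⁻¹) (Set.Ioc a δ) := by
    intro a ha
    have hc : ContinuousOn (fun s : ℝ => s⁻¹) (Set.Icc a δ) :=
      ContinuousOn.inv₀ continuousOn_id (fun x hx => (lt_of_lt_of_le ha hx.1).ne')
    exact hc.integrableOn_Icc.mono_set Set.Ioc_subset_Icc_self
  have hIntIoiδ : IntegrableOn (fun s => (h s)⁻¹) (Set.Ioi δ) := by
    rw [← Set.Ioc_union_Ioi_eq_Ioi hδ1]
    refine IntegrableOn.union ?_ hint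
    have hc : ContinuousOn (fun s => (h s)⁻¹) (Set.Icc δ 1) := by
      apply ContinuousOn.inv₀
      · exact hcont.mono (fun x hx => Set.mem_Ioi.mpr (lt_of_lt_of_le hδpos hx.1))
      · intro x hx; exact (hpos x (lt_of_lt_of_le hδpos hx.1)).ne'
    exact hc.integrableOn_Icc.mono_set Set.Ioc_subset_Icc_self
  set C := ∫ s in Set.Ioi δ, (h s)⁻¹ with hC
  -- splitting the integral
  have hsplit : ∀ a : ℝ, 0 < a → a ≤ δ → (∫ s in Set.Ioi a, (h s)⁻¹) =
      (∫ s in Set.Ioc a δ, (h s)⁻¹) + C := by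
    intro a ha haδ
    rw [← Set.Ioc_union_Ioi_eq_Ioi haδ,
      setIntegral_union (Set.Ioc_disjoint_Ioi le_rfl) measurableSet_Ioi (hIntIoc a ha) hIntIoiδ]
  have hIoc : ∀ a : ℝ, 0 < a → a ≤ δ →
      (∫ s in Set.Ioc a δ, (h s)⁻¹) =
        (∫ s in Set.Ioc a δ, ((h s)⁻¹ - s⁻¹)) + (Real.log δ - Real.log a) := by
    intro a ha haδ
    have h1 : (∫ s in Set.Ioc a δ, s⁻¹) = Real.log δ - Real.log a := by
      rw [← intervalIntegral.integral_of_le haδ, integral_inv_of_pos ha hδpos,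
        Real.log_div hδpos.ne' ha.ne']
    have h2 := integral_sub (hIntIoc a ha) (hIntInv a ha)
    rw [h2, h1]
    ring
  set M := 2*K*δ + |Real.log δ| + |C| with hM
  have hMnonneg : 0 ≤ M := by positivity
  have hE : ∀ a : ℝ, 0 < a → a ≤ δ →
      |(∫ s in Set.Ioi a, (h s)⁻¹) + Real.log a| ≤ M := by
    intro a ha haδ
    have hDle : |∫ s in Set.Ioc a δ, ((h s)⁻¹ - s⁻¹)| ≤ 2*K*δ := by
      have hnorm : ‖∫ s in Set.Ioc a δ, ((h s)⁻¹ - s⁻¹)‖ ≤ (2*K) * (volume (Set.Ioc a δ)).toReal := by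
        apply norm_setIntegral_le_of_norm_le_const
        · rw [Real.volume_Ioc]; exact ENNReal.ofReal_lt_top
        · intro x hx
          exact hbound x ⟨ha.trans hx.1, hx.2⟩
      rw [Real.norm_eq_abs, Real.volume_Ioc, ENNReal.toReal_ofReal (by linarith : (0:ℝ) ≤ δ - a)] at hnorm
      nlinarith [hnorm, mul_nonneg hK.le ha.le]
    rw [hsplit a ha haδ, hIoc a ha haδ]
    have heq : ((∫ s in Set.Ioc a δ, ((h s)⁻¹ - s⁻¹)) + (Real.log δ - Real.log a)) + C + Real.log a
        = (∫ s in Set.Ioc a δ, ((h s)⁻¹ - s⁻¹)) + Real.log δ + C := by ring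
    rw [heq]
    calc |(∫ s in Set.Ioc a δ, ((h s)⁻¹ - s⁻¹)) + Real.log δ + C|
        ≤ |∫ s in Set.Ioc a δ, ((h s)⁻¹ - s⁻¹)| + |Real.log δ| + |C| := abs_add_three _ _ _
      _ ≤ M := by rw [hM]; linarith
  have hmemδ : Set.Ioo (0:ℝ) δ ∈ nhdsWithin 0 (Set.Ioi 0) :=
    Ioo_mem_nhdsGT_of_mem (Set.mem_Ico.mpr ⟨le_refl 0, hδpos⟩)
  -- h a / a → 1
  have hratio : Tendsto (fun a => h a / a) (nhdsWithin 0 (Set.Ioi 0)) (nhds 1) := by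
    have hz : Tendsto (fun a => h a / a - 1) (nhdsWithin 0 (Set.Ioi 0)) (nhds 0) := by
      apply squeeze_zero_norm'
      · filter_upwards [hmemδ] with a ha
        have h1 := happrox a ⟨ha.1, (ha.2.le.trans hδδ₀)⟩
        have key : h a / a - 1 = (h a - a) / a := by rw [sub_div, div_self ha.1.ne']
        rw [Real.norm_eq_abs, key, abs_div, abs_of_pos ha.1, div_le_iff₀ ha.1]
        calc |h a - a| ≤ K * a^2 := h1
          _ = K * a * a := by ring
      · have : Tendsto (fun a : ℝ => K * a) (nhds 0) (nhds 0) := by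
          simpa using ((continuous_mul_left K).tendsto (0:ℝ))
        exact this.mono_left nhdsWithin_le_nhds
    have := hz.add_const 1
    simpa using this
  -- 1/(-log a) → 0
  have hloginv : Tendsto (fun a : ℝ => (-Real.log a)⁻¹) (nhdsWithin 0 (Set.Ioi 0)) (nhds 0) :=
    tendsto_inv_atTop_zero.comp
      (tendsto_neg_atBot_atTop.comp Real.tendsto_log_nhdsGT_zero)
  -- ratio of integral to -log a
  have hψ : Tendsto (fun a => (∫ s in Set.Ioi a, (h s)⁻¹) / (-Real.log a))
      (nhdsWithin 0 (Set.Ioi 0)) (nhds 1) := by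
    have hz : Tendsto (fun a => ((∫ s in Set.Ioi a, (h s)⁻¹) + Real.log a) * (-Real.log a)⁻¹)
        (nhdsWithin 0 (Set.Ioi 0)) (nhds 0) := by
      refine squeeze_zero_norm' (a := fun x => M * |(-Real.log x)⁻¹|) ?_ ?_
      · filter_upwards [hmemδ] with a ha
        rw [Real.norm_eq_abs, abs_mul]
        exact mul_le_mul_of_nonneg_right (hE a ha.1 ha.2.le) (abs_nonneg _)
      · have := hloginv.abs.const_mul M
        simpa using this
    have h1 : Tendsto (fun a => 1 + ((∫ s in Set.Ioi a, (h s)⁻¹) + Real.log a) * (-Real.log a)⁻¹)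
        (nhdsWithin 0 (Set.Ioi 0)) (nhds 1) := by
      have := hz.const_add 1
      simpa using this
    refine h1.congr' ?_
    filter_upwards [hmemδ] with a ha
    have hL : Real.log a < 0 := Real.log_neg ha.1 (lt_of_lt_of_le ha.2 hδ1)
    have hL0 : -Real.log a ≠ 0 := by linarith [hL]
    set I := ∫ s in Set.Ioi a, (h s)⁻¹ with hI
    field_simp
    rw [add_div, div_self hL.ne]; ring
  -- conclude
  have heq : (fun a => (h a / a)^2 * ((∫ s in Set.Ioi a, (h s)⁻¹) / (-Real.log a)))
      =ᶠ[nhdsWithin 0 (Set.Ioi 0)]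
      (fun a : ℝ => (h a ^ 2 * ∫ s in Set.Ioi a, (h s)⁻¹) / (a ^ 2 * |Real.log a|)) := by
    filter_upwards [hmemδ] with a ha
    have hL : Real.log a < 0 := Real.log_neg ha.1 (lt_of_lt_of_le ha.2 hδ1)
    rw [abs_of_neg hL]
    have ha0 : a ≠ 0 := ha.1.ne'
    have hL0 : -Real.log a ≠ 0 := by linarith [hL]
    set I := ∫ s in Set.Ioi a, (h s)⁻¹ with hI
    field_simp
  have hfin := ((hratio.pow 2).mul hψ).congr' heq
  simpa using hfin
end

section
/- Let 0 < r₁ < r₂ and set d = r₂ − r₁. Define the holomorphic functions L(z) = (r₁ − r₂)·e^z, H(z) = −d·e^{((r₁/r₂) − 1)·z}, and φ(z) = 4i·√(d/r₂)·(r₂/r₁)·(r₂ − r₁)·e^{(r₁/(2r₂))·z} on ℂ. Then for every z ∈ ℂ one has L'(z)·H'(z) = (φ'(z)/2)², where ' denotes the complex derivative. -/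
open Complex

theorem stmt12 (r₁ r₂ : ℝ) (hr₁ : 0 < r₁) (hr₁₂ : r₁ < r₂) (z : ℂ) :
    let d : ℝ := r₂ - r₁
    let L : ℂ → ℂ := fun w => ((r₁ : ℂ) - (r₂ : ℂ)) * Complex.exp w
    let H : ℂ → ℂ := fun w => -(d : ℂ) * Complex.exp ((((r₁ : ℂ) / (r₂ : ℂ)) - 1) * w)
    let φ : ℂ → ℂ := fun w => 4 * Complex.I * (Real.sqrt (d / r₂) : ℂ) *
      ((r₂ : ℂ) / (r₁ : ℂ)) * ((r₂ : ℂ) - (r₁ : ℂ)) *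
      Complex.exp (((r₁ : ℂ) / (2 * (r₂ : ℂ))) * w)
    deriv L z * deriv H z = (deriv φ z / 2) ^ 2 := by
  intro d L H φ
  have hr₂ : (0:ℝ) < r₂ := hr₁.trans hr₁₂
  have hr₁' : (r₁:ℂ) ≠ 0 := by exact_mod_cast hr₁.ne'
  have hr₂' : (r₂:ℂ) ≠ 0 := by exact_mod_cast hr₂.ne'
  have hL : deriv L z = ((r₁ : ℂ) - (r₂ : ℂ)) * Complex.exp z := by
    have : HasDerivAt L (((r₁ : ℂ) - (r₂ : ℂ)) * Complex.exp z) z :=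
      (Complex.hasDerivAt_exp z).const_mul _
    exact this.deriv
  have hH : deriv H z = -(d : ℂ) * ((((r₁ : ℂ) / (r₂ : ℂ)) - 1) *
      Complex.exp ((((r₁ : ℂ) / (r₂ : ℂ)) - 1) * z)) := by
    have h1 : HasDerivAt (fun w : ℂ => Complex.exp ((((r₁ : ℂ) / (r₂ : ℂ)) - 1) * w))
        ((((r₁ : ℂ) / (r₂ : ℂ)) - 1) * Complex.exp ((((r₁ : ℂ) / (r₂ : ℂ)) - 1) * z)) z := by
      simpa [mul_comm, Function.comp_def] using (Complex.hasDerivAt_exp _).comp z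
        ((hasDerivAt_id z).const_mul ((((r₁ : ℂ) / (r₂ : ℂ)) - 1)))
    exact (h1.const_mul _).deriv
  have hφ : deriv φ z = (4 * Complex.I * (Real.sqrt (d / r₂) : ℂ) *
      ((r₂ : ℂ) / (r₁ : ℂ)) * ((r₂ : ℂ) - (r₁ : ℂ))) * (((r₁ : ℂ) / (2 * (r₂ : ℂ))) *
      Complex.exp (((r₁ : ℂ) / (2 * (r₂ : ℂ))) * z)) := by
    have h1 : HasDerivAt (fun w : ℂ => Complex.exp (((r₁ : ℂ) / (2 * (r₂ : ℂ))) * w))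
        (((r₁ : ℂ) / (2 * (r₂ : ℂ))) * Complex.exp (((r₁ : ℂ) / (2 * (r₂ : ℂ))) * z)) z := by
      simpa [mul_comm, Function.comp_def] using (Complex.hasDerivAt_exp _).comp z
        ((hasDerivAt_id z).const_mul (((r₁ : ℂ) / (2 * (r₂ : ℂ)))))
    exact (h1.const_mul _).deriv
  rw [hL, hH, hφ]
  have hd0 : (0:ℝ) ≤ d / r₂ := div_nonneg (sub_nonneg.2 hr₁₂.le) hr₂.le
  have hs : ((Real.sqrt (d / r₂) : ℂ))^2 = ((r₂ : ℂ) - (r₁ : ℂ)) / (r₂ : ℂ) := by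
    rw [← Complex.ofReal_pow, Real.sq_sqrt hd0]
    show (((r₂ - r₁) / r₂ : ℝ) : ℂ) = _
    push_cast
    ring
  have hexp : Complex.exp z * Complex.exp ((((r₁ : ℂ) / (r₂ : ℂ)) - 1) * z) =
      Complex.exp (((r₁ : ℂ) / (2 * (r₂ : ℂ))) * z) ^ 2 := by
    rw [← Complex.exp_add, sq, ← Complex.exp_add]
    congr 1
    field_simp
    ring
  have hd : (d : ℂ) = (r₂ : ℂ) - (r₁ : ℂ) := by
    show (((r₂ - r₁ : ℝ)) : ℂ) = _; push_cast; ring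
  set s : ℂ := (Real.sqrt (d / r₂) : ℂ) with hsdef
  set E : ℂ := Complex.exp (((r₁ : ℂ) / (2 * (r₂ : ℂ))) * z) with hEdef
  rw [hd]
  have h1 : 4 * Complex.I * s * ((r₂:ℂ) / (r₁:ℂ)) * ((r₂:ℂ) - (r₁:ℂ)) *
      (((r₁:ℂ) / (2 * (r₂:ℂ))) * E) / 2 = Complex.I * s * ((r₂:ℂ) - (r₁:ℂ)) * E := by
    field_simp
    ring
  rw [h1]
  have h2 : (Complex.I * s * ((r₂:ℂ) - (r₁:ℂ)) * E)^2
      = Complex.I^2 * s^2 * ((r₂:ℂ) - (r₁:ℂ))^2 * E^2 := by ring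
  rw [h2, hs, Complex.I_sq, ← hexp]
  field_simp
  ring
end
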